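/- Let G be a connected, locally finite graph that is k-almost-Euclidean, and let 1 ≤ p < ∞. Then the operator norm of the shift operator S on ℓ^p(G) equals k. -/

import Mathlib

/-- The shift (adjacency) operator: `(Sf)(u) = ∑_{v ~ u} f(v)`. -/
noncomputable def shiftOp {V : Type*} (G : SimpleGraph V) (f : V → ℂ) (u : V) : ℂ :=
  ∑ᶠ v ∈ G.neighborSet u, f v

/-- The degree of a vertex. -/
noncomputable def gdeg {V : Type*} (G : SimpleGraph V) (v : V) : ℕ :=
  (G.neighborSet v).ncard

/-- Membership in ℓ^p: `∑_{v} |f(v)|^p < ∞`. -/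
def memlp {V : Type*} (f : V → ℂ) (p : ℝ) : Prop :=
  Summable fun v => ‖f v‖ ^ p

/-- The ℓ^p norm: `(∑_{v} |f(v)|^p)^{1/p}`. -/
noncomputable def lpnorm {V : Type*} (f : V → ℂ) (p : ℝ) : ℝ :=
  (∑' v, ‖f v‖ ^ p) ^ (1 / p)

/-- `γ(n)`: the number of vertices at graph distance `n` from the distinguished vertex `o`. -/
noncomputable def sphereCard {V : Type*} (G : SimpleGraph V) (o : V) (n : ℕ) : ℕ :=
  {v | G.dist o v = n}.ncard

open scoped ENNReal NNReal
open Filter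

section Aux

variable {V : Type*}

lemma pow_sum_le_ennreal {ι : Type*} (s : Finset ι) (a : ι → ℝ≥0∞) {p : ℝ} (hp : 1 ≤ p) :
    (∑ i ∈ s, a i) ^ p ≤ (s.card : ℝ≥0∞) ^ (p - 1) * ∑ i ∈ s, a i ^ p := by
  have hp0 : (0:ℝ) < p := lt_of_lt_of_le one_pos hp
  rcases s.eq_empty_or_nonempty with rfl | hs
  · simp [ENNReal.zero_rpow_of_pos hp0]
  · have hn0 : (s.card : ℝ≥0∞) ≠ 0 := by
      simpa using hs.card_pos.ne'
    have hnt : (s.card : ℝ≥0∞) ≠ ⊤ := by simp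
    have hw : ∑ _i ∈ s, (s.card : ℝ≥0∞)⁻¹ = 1 := by
      rw [Finset.sum_const, nsmul_eq_mul, ENNReal.mul_inv_cancel hn0 hnt]
    have h := ENNReal.rpow_arith_mean_le_arith_mean_rpow s (fun _ => (s.card : ℝ≥0∞)⁻¹) a hw hp
    rw [← Finset.mul_sum, ← Finset.mul_sum, ENNReal.mul_rpow_of_nonneg _ _ hp0.le] at h
    calc (∑ i ∈ s, a i) ^ p
        = ((s.card:ℝ≥0∞)^p * ((s.card:ℝ≥0∞)⁻¹^p)) * (∑ i ∈ s, a i) ^ p := by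
          rw [← ENNReal.mul_rpow_of_nonneg _ _ hp0.le, ENNReal.mul_inv_cancel hn0 hnt,
            ENNReal.one_rpow, one_mul]
      _ = (s.card:ℝ≥0∞)^p * (((s.card:ℝ≥0∞)⁻¹^p) * (∑ i ∈ s, a i) ^ p) := by ring
      _ ≤ (s.card:ℝ≥0∞)^p * ((s.card:ℝ≥0∞)⁻¹ * ∑ i ∈ s, a i ^ p) := by gcongr
      _ = ((s.card:ℝ≥0∞)^p * (s.card:ℝ≥0∞)⁻¹) * ∑ i ∈ s, a i ^ p := by ring
      _ = (s.card : ℝ≥0∞) ^ (p - 1) * ∑ i ∈ s, a i ^ p := by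
          rw [← ENNReal.rpow_neg_one (s.card:ℝ≥0∞), ← ENNReal.rpow_add _ _ hn0 hnt]
          ring_nf

lemma shiftOp_eq_sum (G : SimpleGraph V) (hlf : ∀ v, (G.neighborSet v).Finite) (f : V → ℂ)
    (u : V) : shiftOp G f u = ∑ v ∈ (hlf u).toFinset, f v :=
  finsum_mem_eq_finite_toFinset_sum _ (hlf u)

lemma gdeg_eq_card (G : SimpleGraph V) (hlf : ∀ v, (G.neighborSet v).Finite) (v : V) :
    gdeg G v = (hlf v).toFinset.card :=
  Set.ncard_eq_toFinset_card _ (hlf v)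

lemma double_count (G : SimpleGraph V) (hlf : ∀ v, (G.neighborSet v).Finite)
    (a : V → ℝ≥0∞) :
    ∑' u, ∑ v ∈ (hlf u).toFinset, a v = ∑' v, (gdeg G v : ℝ≥0∞) * a v := by
  classical
  have key : ∀ u, ∑ v ∈ (hlf u).toFinset, a v
      = ∑' v, Set.indicator (G.neighborSet u) a v := by
    intro u
    rw [tsum_eq_sum (s := (hlf u).toFinset)
      (by intro b hb; exact Set.indicator_of_notMem (by simpa using hb) a)]
    exact (Finset.sum_congr rfl fun v hv => (Set.indicator_of_mem (by simpa using hv) a).symm)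
  simp_rw [key]
  rw [ENNReal.tsum_comm]
  congr 1; funext v
  have h1 : ∀ u, Set.indicator (G.neighborSet u) a v
      = Set.indicator (G.neighborSet v) (fun _ => a v) u := by
    intro u
    by_cases h : G.Adj u v
    · rw [Set.indicator_of_mem (by simpa using h) a,
        Set.indicator_of_mem (by simpa using h.symm)]
    · rw [Set.indicator_of_notMem (by simpa using h) a,
        Set.indicator_of_notMem (by simpa using fun h' => h (SimpleGraph.Adj.symm h'))]
  simp_rw [h1]
  rw [tsum_eq_sum (s := (hlf v).toFinset)
    (by intro b hb; exact Set.indicator_of_notMem (by simpa using hb) _)]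
  rw [Finset.sum_congr rfl (fun u hu => Set.indicator_of_mem (by simpa using hu) _),
    Finset.sum_const, nsmul_eq_mul, gdeg_eq_card G hlf]

lemma coe_pow_eq (x : ℂ) {p : ℝ} (hp : 0 ≤ p) :
    (‖x‖₊ : ℝ≥0∞) ^ p = ((‖x‖₊ ^ p : ℝ≥0) : ℝ≥0∞) :=
  (ENNReal.coe_rpow_of_nonneg _ hp).symm

lemma norm_pow_eq (x : ℂ) {p : ℝ} : ‖x‖ ^ p = ((‖x‖₊ ^ p : ℝ≥0) : ℝ) := by
  rw [NNReal.coe_rpow, coe_nnnorm]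

lemma memlp_iff (f : V → ℂ) {p : ℝ} (hp : 0 ≤ p) :
    memlp f p ↔ ∑' v, (‖f v‖₊ : ℝ≥0∞) ^ p ≠ ⊤ := by
  simp_rw [coe_pow_eq _ hp, ENNReal.tsum_coe_ne_top_iff_summable, memlp, norm_pow_eq,
    NNReal.summable_coe]

lemma tsum_norm_eq (f : V → ℂ) {p : ℝ} (hp : 0 ≤ p) :
    ∑' v, ‖f v‖ ^ p = (∑' v, (‖f v‖₊ : ℝ≥0∞) ^ p).toReal := by
  rw [ENNReal.tsum_toReal_eq (fun v => by simp [coe_pow_eq _ hp])]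
  congr 1; funext v
  rw [norm_pow_eq, coe_pow_eq _ hp, ENNReal.coe_toReal]

lemma shift_bound_ennreal (G : SimpleGraph V) (hlf : ∀ v, (G.neighborSet v).Finite)
    (k : ℕ) (hreg : ∀ v, gdeg G v ≤ k) (hk : 1 ≤ k) {p : ℝ} (hp : 1 ≤ p) (f : V → ℂ) :
    ∑' u, (‖shiftOp G f u‖₊ : ℝ≥0∞) ^ p ≤ (k : ℝ≥0∞) ^ p * ∑' v, (‖f v‖₊ : ℝ≥0∞) ^ p := by
  have hp0 : (0:ℝ) < p := lt_of_lt_of_le one_pos hp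
  have hk0 : (k : ℝ≥0∞) ≠ 0 := by
    exact_mod_cast Nat.cast_ne_zero (R := ℝ≥0∞) |>.mpr (by omega)
  have hkt : (k : ℝ≥0∞) ≠ ⊤ := by simp
  have step1 : ∀ u, (‖shiftOp G f u‖₊ : ℝ≥0∞) ^ p
      ≤ (k : ℝ≥0∞) ^ (p-1) * ∑ v ∈ (hlf u).toFinset, (‖f v‖₊ : ℝ≥0∞) ^ p := by
    intro u
    calc (‖shiftOp G f u‖₊ : ℝ≥0∞) ^ p
        ≤ (∑ v ∈ (hlf u).toFinset, (‖f v‖₊ : ℝ≥0∞)) ^ p := by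
          apply ENNReal.rpow_le_rpow _ hp0.le
          rw [shiftOp_eq_sum G hlf, ← ENNReal.coe_finset_sum]
          exact_mod_cast nnnorm_sum_le _ _
      _ ≤ (((hlf u).toFinset.card : ℝ≥0∞))^(p-1) * ∑ v ∈ (hlf u).toFinset, (‖f v‖₊:ℝ≥0∞)^p :=
          pow_sum_le_ennreal _ _ hp
      _ ≤ (k : ℝ≥0∞) ^ (p-1) * ∑ v ∈ (hlf u).toFinset, (‖f v‖₊:ℝ≥0∞)^p := by
          apply mul_le_mul_left
          apply ENNReal.rpow_le_rpow _ (by linarith)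
          exact_mod_cast (gdeg_eq_card G hlf u ▸ hreg u)
  calc ∑' u, (‖shiftOp G f u‖₊ : ℝ≥0∞) ^ p
      ≤ ∑' u, (k : ℝ≥0∞) ^ (p-1) * ∑ v ∈ (hlf u).toFinset, (‖f v‖₊ : ℝ≥0∞) ^ p :=
        ENNReal.tsum_le_tsum step1
    _ = (k : ℝ≥0∞) ^ (p-1) * ∑' u, ∑ v ∈ (hlf u).toFinset, (‖f v‖₊ : ℝ≥0∞) ^ p :=
        ENNReal.tsum_mul_left
    _ = (k : ℝ≥0∞) ^ (p-1) * ∑' v, (gdeg G v : ℝ≥0∞) * (‖f v‖₊ : ℝ≥0∞) ^ p := by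
        rw [double_count G hlf]
    _ ≤ (k : ℝ≥0∞) ^ (p-1) * ∑' v, (k : ℝ≥0∞) * (‖f v‖₊ : ℝ≥0∞) ^ p := by
        apply mul_le_mul_right
        apply ENNReal.tsum_le_tsum
        intro v
        exact mul_le_mul_left (by exact_mod_cast hreg v) _
    _ = (k : ℝ≥0∞) ^ (p-1) * ((k : ℝ≥0∞) * ∑' v, (‖f v‖₊ : ℝ≥0∞) ^ p) :=
        by rw [ENNReal.tsum_mul_left]
    _ = (k : ℝ≥0∞) ^ p * ∑' v, (‖f v‖₊ : ℝ≥0∞) ^ p := by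
        rw [← mul_assoc]
        congr 1
        calc (k : ℝ≥0∞) ^ (p-1) * (k : ℝ≥0∞) = (k : ℝ≥0∞) ^ (p-1) * (k : ℝ≥0∞) ^ (1:ℝ) := by
              rw [ENNReal.rpow_one]
          _ = (k : ℝ≥0∞) ^ (p-1+1) := (ENNReal.rpow_add _ _ hk0 hkt).symm
          _ = (k : ℝ≥0∞) ^ p := by ring_nf

lemma upper_bound (G : SimpleGraph V) (hlf : ∀ v, (G.neighborSet v).Finite)
    (k : ℕ) (hreg : ∀ v, gdeg G v ≤ k) (hk : 1 ≤ k) {p : ℝ} (hp : 1 ≤ p)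
    (f : V → ℂ) (hf : memlp f p) :
    memlp (shiftOp G f) p ∧ lpnorm (shiftOp G f) p ≤ (k : ℝ) * lpnorm f p := by
  have hp0 : (0:ℝ) < p := lt_of_lt_of_le one_pos hp
  have hAf : ∑' v, (‖f v‖₊ : ℝ≥0∞) ^ p ≠ ⊤ := (memlp_iff f hp0.le).mp hf
  have hb := shift_bound_ennreal G hlf k hreg hk hp f
  have hkpt : (k : ℝ≥0∞) ^ p ≠ ⊤ := by
    apply ENNReal.rpow_ne_top_of_nonneg hp0.le; simp
  have htop : (k : ℝ≥0∞) ^ p * ∑' v, (‖f v‖₊ : ℝ≥0∞) ^ p ≠ ⊤ := ENNReal.mul_ne_top hkpt hAf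
  have hmem : memlp (shiftOp G f) p := (memlp_iff _ hp0.le).mpr (ne_top_of_le_ne_top htop hb)
  refine ⟨hmem, ?_⟩
  rw [lpnorm, lpnorm, tsum_norm_eq _ hp0.le, tsum_norm_eq f hp0.le]
  have h1 := ENNReal.toReal_mono htop hb
  rw [ENNReal.toReal_mul] at h1
  have hks : ((k : ℝ≥0∞) ^ p).toReal = (k:ℝ) ^ p := by
    rw [← ENNReal.toReal_rpow]; simp
  rw [hks] at h1
  calc ((∑' u, (‖shiftOp G f u‖₊ : ℝ≥0∞) ^ p).toReal) ^ (1/p)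
      ≤ ((k:ℝ) ^ p * (∑' v, (‖f v‖₊ : ℝ≥0∞) ^ p).toReal) ^ (1/p) :=
        Real.rpow_le_rpow ENNReal.toReal_nonneg h1 (by positivity)
    _ = ((k:ℝ) ^ p) ^ (1/p) * ((∑' v, (‖f v‖₊ : ℝ≥0∞) ^ p).toReal) ^ (1/p) :=
        Real.mul_rpow (by positivity) ENNReal.toReal_nonneg
    _ = (k : ℝ) * ((∑' v, (‖f v‖₊ : ℝ≥0∞) ^ p).toReal) ^ (1/p) := by
        rw [← Real.rpow_mul (by positivity), mul_one_div, div_self hp0.ne', Real.rpow_one]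

lemma ball_finite (G : SimpleGraph V) (hconn : G.Connected)
    (hlf : ∀ v, (G.neighborSet v).Finite) (o : V) :
    ∀ n : ℕ, {v | G.dist o v ≤ n}.Finite := by
  intro n
  induction n with
  | zero =>
    apply Set.Finite.subset (Set.finite_singleton o)
    intro v hv
    simp only [Set.mem_setOf_eq, Nat.le_zero] at hv
    exact ((hconn.dist_eq_zero_iff).mp hv).symm
  | succ n ih =>
    apply Set.Finite.subset (ih.union (Set.Finite.biUnion ih (fun u _ => hlf u)))
    intro v hv
    simp only [Set.mem_setOf_eq] at hv
    rcases le_or_gt (G.dist o v) n with h | h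
    · exact Or.inl h
    · have hd : G.dist o v = n + 1 := le_antisymm hv h
      obtain ⟨w, hw⟩ := hconn.exists_walk_length_eq_dist o v
      cases hwr : w.reverse with
      | nil =>
        have := w.length_reverse
        rw [hwr] at this
        rw [SimpleGraph.Walk.length_nil, hw, hd] at this; omega
      | @cons _ u _ hadj r =>
        right
        have hlen : r.length = n := by
          have := w.length_reverse
          rw [hwr] at this
          simp only [SimpleGraph.Walk.length_cons, hw, hd] at this
          omega
        refine Set.mem_biUnion (show u ∈ {v | G.dist o v ≤ n} from ?_) hadj.symm
        have := G.dist_le r.reverse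
        simpa [hlen] using this

lemma ball_ncard (G : SimpleGraph V) (hconn : G.Connected)
    (hlf : ∀ v, (G.neighborSet v).Finite) (o : V) :
    ∀ n : ℕ, ({v | G.dist o v ≤ n}).ncard = ∑ i ∈ Finset.range (n+1), sphereCard G o i := by
  intro n
  induction n with
  | zero =>
    rw [Finset.sum_range_one]
    congr 1
    ext v
    simp [Nat.le_zero, sphereCard]
  | succ n ih =>
    have hsplit : {v | G.dist o v ≤ n + 1} = {v | G.dist o v ≤ n} ∪ {v | G.dist o v = n + 1} := by
      ext v; simp only [Set.mem_setOf_eq, Set.mem_union]; omega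
    have hdisj : Disjoint {v | G.dist o v ≤ n} {v | G.dist o v = n + 1} := by
      rw [Set.disjoint_left]; intro v h1 h2
      simp only [Set.mem_setOf_eq] at h1 h2; omega
    have hsphere : {v | G.dist o v = n + 1}.Finite := by
      apply (ball_finite G hconn hlf o (n+1)).subset
      intro v hv; simp only [Set.mem_setOf_eq] at hv ⊢; omega
    rw [hsplit, Set.ncard_union_eq hdisj (ball_finite G hconn hlf o n) hsphere, ih,
      Finset.sum_range_succ (n := n+1), Finset.sum_range_succ (n := n)]
    rfl

lemma key_estimate (G : SimpleGraph V) (hconn : G.Connected)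
    (hlf : ∀ v, (G.neighborSet v).Finite) (o : V) (k : ℕ)
    (hcof : {v | gdeg G v ≠ k}.Finite)
    {p : ℝ} (hp : 1 ≤ p) {C : ℝ} (hC0 : 0 ≤ C)
    (hC : ∀ f : V → ℂ, memlp f p →
      memlp (shiftOp G f) p ∧ lpnorm (shiftOp G f) p ≤ C * lpnorm f p)
    (n : ℕ) :
    (k:ℝ) ^ p * ((({v | G.dist o v ≤ n}).ncard : ℝ) - (hcof.toFinset.card : ℝ))
      ≤ C ^ p * (({v | G.dist o v ≤ n+1}).ncard : ℝ) := by
  classical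
  have hp0 : (0:ℝ) < p := lt_of_lt_of_le one_pos hp
  set f : V → ℂ := fun v => if G.dist o v ≤ n+1 then (1:ℂ) else 0 with hfdef
  have hfz : ∀ v ∉ (ball_finite G hconn hlf o (n+1)).toFinset, ‖f v‖ ^ p = 0 := by
    intro v hv
    rw [Set.Finite.mem_toFinset] at hv
    simp only [Set.mem_setOf_eq] at hv
    simp [hfdef, hv, Real.zero_rpow hp0.ne']
  have hmemf : memlp f p := summable_of_ne_finset_zero hfz
  have htsumf : ∑' v, ‖f v‖ ^ p = (({v | G.dist o v ≤ n+1}).ncard : ℝ) := by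
    have hone : ∑ v ∈ (ball_finite G hconn hlf o (n+1)).toFinset, ‖f v‖ ^ p
        = ∑ _v ∈ (ball_finite G hconn hlf o (n+1)).toFinset, (1:ℝ) := by
      apply Finset.sum_congr rfl
      intro v hv
      rw [Set.Finite.mem_toFinset] at hv
      simp only [Set.mem_setOf_eq] at hv
      simp [hfdef, hv, Real.one_rpow]
    rw [tsum_eq_sum hfz, hone, Finset.sum_const, nsmul_eq_mul, mul_one,
      Set.ncard_eq_toFinset_card _ (ball_finite G hconn hlf o (n+1))]
  obtain ⟨hmemS, hle⟩ := hC f hmemf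
  set X := ∑' u, ‖shiftOp G f u‖ ^ p with hXdef
  have hX0 : 0 ≤ X := tsum_nonneg fun u => Real.rpow_nonneg (norm_nonneg _) p
  set Gf := ((ball_finite G hconn hlf o n).toFinset).filter (fun u => gdeg G u = k) with hGf
  have hval : ∀ u ∈ Gf, ‖shiftOp G f u‖ ^ p = (k:ℝ) ^ p := by
    intro u hu
    rw [hGf, Finset.mem_filter, Set.Finite.mem_toFinset] at hu
    obtain ⟨hub, huk⟩ := hu
    simp only [Set.mem_setOf_eq] at hub
    have hone : ∀ v ∈ (hlf u).toFinset, f v = 1 := by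
      intro v hv
      rw [Set.Finite.mem_toFinset] at hv
      have hadj : G.Adj u v := hv
      have hd1 : G.dist u v = 1 := (SimpleGraph.dist_eq_one_iff_adj).mpr hadj
      have htri := hconn.dist_triangle (u := o) (v := u) (w := v)
      have : G.dist o v ≤ n + 1 := by omega
      simp [hfdef, this]
    rw [shiftOp_eq_sum G hlf, Finset.sum_congr rfl hone, Finset.sum_const, nsmul_eq_mul,
      mul_one, ← gdeg_eq_card G hlf, huk]
    simp
  have hlow : (Gf.card : ℝ) * (k:ℝ) ^ p ≤ X := by
    have h := Summable.sum_le_tsum Gf (fun u _ => Real.rpow_nonneg (norm_nonneg _) p) hmemS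
    rw [Finset.sum_congr rfl hval, Finset.sum_const, nsmul_eq_mul] at h
    exact h
  have hcard : (({v | G.dist o v ≤ n}).ncard : ℝ) - (hcof.toFinset.card : ℝ)
      ≤ (Gf.card : ℝ) := by
    have h1 : ((ball_finite G hconn hlf o n).toFinset).filter (fun u => ¬ gdeg G u = k)
        ⊆ hcof.toFinset := by
      intro u hu
      rw [Finset.mem_filter] at hu
      rw [Set.Finite.mem_toFinset]
      exact hu.2
    have h2 := Finset.card_filter_add_card_filter_not
      (s := (ball_finite G hconn hlf o n).toFinset) (p := fun u => gdeg G u = k)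
    have h3 := Finset.card_le_card h1
    have h4 : ({v | G.dist o v ≤ n}).ncard = (ball_finite G hconn hlf o n).toFinset.card :=
      Set.ncard_eq_toFinset_card _ _
    rw [h4]
    have h5 : ((ball_finite G hconn hlf o n).toFinset.card : ℝ)
        = (Gf.card : ℝ) + ((Finset.filter (fun a => ¬gdeg G a = k)
          (ball_finite G hconn hlf o n).toFinset).card : ℝ) := by
      rw [hGf]; exact_mod_cast h2.symm
    have h6 : ((Finset.filter (fun a => ¬gdeg G a = k)
        (ball_finite G hconn hlf o n).toFinset).card : ℝ) ≤ (hcof.toFinset.card : ℝ) := by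
      exact_mod_cast h3
    linarith
  have hupper : X ≤ C ^ p * (({v | G.dist o v ≤ n+1}).ncard : ℝ) := by
    have hlpS : lpnorm (shiftOp G f) p = X ^ (1/p) := rfl
    have hXeq : X = (lpnorm (shiftOp G f) p) ^ p := by
      rw [hlpS, ← Real.rpow_mul hX0, one_div, inv_mul_cancel₀ hp0.ne', Real.rpow_one]
    have hlpf0 : 0 ≤ lpnorm f p :=
      Real.rpow_nonneg (tsum_nonneg fun v => Real.rpow_nonneg (norm_nonneg _) p) _
    have hlpS0 : 0 ≤ lpnorm (shiftOp G f) p := Real.rpow_nonneg hX0 _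
    calc X = (lpnorm (shiftOp G f) p) ^ p := hXeq
      _ ≤ (C * lpnorm f p) ^ p := Real.rpow_le_rpow hlpS0 hle hp0.le
      _ = C ^ p * (lpnorm f p) ^ p := Real.mul_rpow hC0 hlpf0
      _ = C ^ p * (({v | G.dist o v ≤ n+1}).ncard : ℝ) := by
          congr 1
          rw [lpnorm, htsumf, ← Real.rpow_mul (by positivity), one_div,
            inv_mul_cancel₀ hp0.ne', Real.rpow_one]
  calc (k:ℝ) ^ p * ((({v | G.dist o v ≤ n}).ncard : ℝ) - (hcof.toFinset.card : ℝ))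
      ≤ (k:ℝ) ^ p * (Gf.card : ℝ) := by
        apply mul_le_mul_of_nonneg_left hcard (by positivity)
    _ = (Gf.card : ℝ) * (k:ℝ) ^ p := mul_comm _ _
    _ ≤ X := hlow
    _ ≤ C ^ p * (({v | G.dist o v ≤ n+1}).ncard : ℝ) := hupper

end Aux

/-- If `G` is a connected, locally finite, `k`-almost-Euclidean graph
and `1 ≤ p < ∞`, then the operator norm of the shift on `ℓ^p(G)` equals `k`
(expressed as: `k` is the least constant `C ≥ 0` such that `S` maps `ℓ^p(G)` into
itself with `‖Sf‖_p ≤ C‖f‖_p`). -/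
theorem stmt3 (V : Type*) [Countable V] [Infinite V] (G : SimpleGraph V)
    (hconn : G.Connected) (hlf : ∀ v, (G.neighborSet v).Finite)
    (o : V) (k : ℕ)
    (hreg : ∀ v, gdeg G v ≤ k) (hcof : {v | gdeg G v ≠ k}.Finite)
    (heuc : Filter.Tendsto
      (fun n => ((sphereCard G o n : ℝ) + (sphereCard G o (n + 1) : ℝ)) /
        ∑ i ∈ Finset.range (n + 1), (sphereCard G o i : ℝ))
      Filter.atTop (nhds 0))
    (p : ℝ) (hp : 1 ≤ p) :
    IsLeast {C : ℝ | 0 ≤ C ∧ ∀ f : V → ℂ, memlp f p →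
      memlp (shiftOp G f) p ∧ lpnorm (shiftOp G f) p ≤ C * lpnorm f p} (k : ℝ) := by
  have hp0 : (0:ℝ) < p := lt_of_lt_of_le one_pos hp
  -- k ≥ 1
  have hk : 1 ≤ k := by
    obtain ⟨v, hv⟩ := (hcof.infinite_compl).nonempty
    simp only [Set.mem_compl_iff, Set.mem_setOf_eq, not_not] at hv
    obtain ⟨w, hw⟩ := exists_ne v
    obtain ⟨q⟩ := hconn v w
    cases q with
    | nil => exact absurd rfl hw
    | cons hadj r =>
      have hpos : 0 < gdeg G v := (Set.ncard_pos (hlf v)).mpr ⟨_, hadj⟩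
      omega
  constructor
  · exact ⟨Nat.cast_nonneg k, fun f hf => upper_bound G hlf k hreg hk hp f hf⟩
  · rintro C ⟨hC0, hC⟩
    set c : ℕ → ℝ := fun n => (({v | G.dist o v ≤ n}).ncard : ℝ) with hcdef
    have hBf : ∀ n, {v | G.dist o v ≤ n}.Finite := ball_finite G hconn hlf o
    have hc1 : ∀ n, 1 ≤ c n := by
      intro n
      have ho : o ∈ {v | G.dist o v ≤ n} := by simp [SimpleGraph.dist_self]
      have h1 : 1 ≤ ({v | G.dist o v ≤ n}).ncard := (Set.ncard_pos (hBf n)).mpr ⟨o, ho⟩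
      simp only [hcdef]
      exact_mod_cast h1
    have hcs : ∀ n, c n = ∑ i ∈ Finset.range (n+1), (sphereCard G o i : ℝ) := by
      intro n
      simp only [hcdef]
      rw [ball_ncard G hconn hlf o n]
      push_cast
      rfl
    have hsucc : ∀ n, c (n+1) = c n + (sphereCard G o (n+1) : ℝ) := by
      intro n; rw [hcs, hcs, Finset.sum_range_succ]
    have hmono : Monotone c := by
      apply monotone_nat_of_le_succ
      intro n
      rw [hsucc]
      exact le_add_of_nonneg_right (Nat.cast_nonneg _)
    have hunb : ∀ b : ℝ, ∃ n, b ≤ c n := by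
      intro b
      obtain ⟨s, hs⟩ := Infinite.exists_subset_card_eq V ⌈b⌉₊
      refine ⟨s.sup (G.dist o), ?_⟩
      have hsub : (s : Set V) ⊆ {v | G.dist o v ≤ s.sup (G.dist o)} :=
        fun v hv => by simpa using Finset.le_sup (f := G.dist o) (by simpa using hv)
      have hle2 : s.card ≤ ({v | G.dist o v ≤ s.sup (G.dist o)}).ncard := by
        rw [← Set.ncard_coe_finset s]
        exact Set.ncard_le_ncard hsub (hBf _)
      calc b ≤ (⌈b⌉₊:ℝ) := Nat.le_ceil b
        _ ≤ c _ := by simp only [hcdef]; rw [← hs]; exact_mod_cast hle2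
    have hctop : Tendsto c atTop atTop :=
      tendsto_atTop_atTop_of_monotone hmono hunb
    have hγ : Tendsto (fun n => (sphereCard G o (n+1) : ℝ) / c (n+1)) atTop (nhds 0) := by
      apply squeeze_zero (g := fun n =>
        ((sphereCard G o n : ℝ) + (sphereCard G o (n+1) : ℝ)) / c n)
      · intro n; positivity
      · intro n
        apply div_le_div₀ (by positivity) (by linarith [Nat.cast_nonneg (α := ℝ) (sphereCard G o n)])
          (lt_of_lt_of_le one_pos (hc1 n)) (hmono (Nat.le_succ n))
      · apply Filter.Tendsto.congr _ heuc
        intro n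
        rw [hcs]
    have hE : Tendsto (fun n => (hcof.toFinset.card : ℝ) / c (n+1)) atTop (nhds 0) :=
      Tendsto.div_atTop tendsto_const_nhds (hctop.comp (tendsto_add_atTop_nat 1))
    have hratio : Tendsto (fun n => c n / c (n+1)) atTop (nhds 1) := by
      have heq : ∀ n, c n / c (n+1) = 1 - (sphereCard G o (n+1):ℝ) / c (n+1) := by
        intro n
        have h1 : c (n+1) ≠ 0 := by have := hc1 (n+1); linarith
        field_simp
        linarith [hsucc n]
      apply Filter.Tendsto.congr (fun n => (heq n).symm)
      simpa using (tendsto_const_nhds (x := (1:ℝ)) (f := atTop)).sub hγ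
    have hT : Tendsto (fun n => (k:ℝ)^p * ((c n - (hcof.toFinset.card : ℝ)) / c (n+1)))
        atTop (nhds ((k:ℝ)^p)) := by
      have h2 : Tendsto (fun n => (c n - (hcof.toFinset.card : ℝ)) / c (n+1)) atTop (nhds 1) := by
        have := hratio.sub hE
        simp only [sub_zero] at this
        apply Filter.Tendsto.congr _ this
        intro n
        rw [sub_div]
      have := (tendsto_const_nhds (x := (k:ℝ)^p) (f := atTop)).mul h2
      simpa using this
    have hkpCp : (k:ℝ)^p ≤ C^p := by
      apply le_of_tendsto hT
      filter_upwards with n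
      have hkey := key_estimate G hconn hlf o k hcof hp hC0 hC n
      have hpos : 0 < c (n+1) := lt_of_lt_of_le one_pos (hc1 _)
      rw [mul_div_assoc'] at *
      rw [div_le_iff₀ hpos]
      exact hkey
    by_contra hlt
    push_neg at hlt
    have := Real.rpow_lt_rpow hC0 hlt hp0
    linarith
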